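/- Let r, M, d be positive natural numbers, let ε ∈ ℝ with 0 ≤ ε ≤ 1/2, and let q : ({0,1}^r) × ({0,1}^M) → ℝ be any function. Define the binary Fourier transform in the second argument, q̂(x, s) = 2^{-M} · Σ_{y ∈ {0,1}^M} (-1)^{s·y} q(x, y), and assume the spectral gap condition: q̂(x, s) = 0 for every x and every s with 0 < wt(s) < d. Define the noisy function q'(x, y) = Σ_{s ∈ {0,1}^M} (1-2ε)^{wt(s)} (-1)^{s·y} q̂(x, s). Then the noisy function is exponentially close (in d) to its y-independent zero-mode: 2^{-M} · Σ_{y ∈ {0,1}^M} ( Σ_{x ∈ {0,1}^r} |q'(x, y) - q̂(x, 0)| )² ≤ 2^r · (1-2ε)^{2d} · ( 2^{-M} · Σ_{x ∈ {0,1}^r} Σ_{y ∈ {0,1}^M} q(x, y)² ). -/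

import Mathlib

/-- The Hamming weight of `s ∈ {0,1}^M`: the number of coordinates equal to `1`. -/
def hammingWt {M : ℕ} (s : Fin M → Fin 2) : ℕ :=
  (Finset.univ.filter fun i => s i = 1).card

/-- Binary Fourier transform in the second argument:
`q̂(x,s) = 2^{-M} Σ_y (-1)^{s·y} q(x,y)`. -/
noncomputable def fourier2 {r M : ℕ} (q : (Fin r → Fin 2) → (Fin M → Fin 2) → ℝ)
    (x : Fin r → Fin 2) (s : Fin M → Fin 2) : ℝ :=
  ((2 : ℝ) ^ M)⁻¹ * ∑ y : Fin M → Fin 2,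
    (-1 : ℝ) ^ (∑ i, (s i).val * (y i).val) * q x y

/-- The noisy function: `q'(x,y) = Σ_s (1-2ε)^{wt s} (-1)^{s·y} q̂(x,s)`. -/
noncomputable def noisyFn {r M : ℕ} (ε : ℝ) (q : (Fin r → Fin 2) → (Fin M → Fin 2) → ℝ)
    (x : Fin r → Fin 2) (y : Fin M → Fin 2) : ℝ :=
  ∑ s : Fin M → Fin 2,
    (1 - 2 * ε) ^ hammingWt s * (-1 : ℝ) ^ (∑ i, (s i).val * (y i).val) * fourier2 q x s

lemma step_aux (a b : Fin 2) :
    (∑ c : Fin 2, (-1:ℝ) ^ ((a.val + b.val) * c.val)) = if a = b then 2 else 0 := by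
  fin_cases a <;> fin_cases b <;> norm_num [Fin.sum_univ_two]

set_option maxHeartbeats 1000000 in
lemma orth {M : ℕ} (u v : Fin M → Fin 2) :
    ∑ y : Fin M → Fin 2,
      (-1:ℝ) ^ (∑ i, (u i).val * (y i).val) * (-1:ℝ) ^ (∑ i, (v i).val * (y i).val)
    = if u = v then (2:ℝ)^M else 0 := by
  have h1 : ∀ y : Fin M → Fin 2,
      (-1:ℝ) ^ (∑ i, (u i).val * (y i).val) * (-1:ℝ) ^ (∑ i, (v i).val * (y i).val)
      = ∏ i, (-1:ℝ) ^ (((u i).val + (v i).val) * (y i).val) := by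
    intro y
    rw [← pow_add, ← Finset.sum_add_distrib, ← Finset.prod_pow_eq_pow_sum]
    congr 1; funext i; congr 1; ring
  calc ∑ y : Fin M → Fin 2,
      (-1:ℝ) ^ (∑ i, (u i).val * (y i).val) * (-1:ℝ) ^ (∑ i, (v i).val * (y i).val)
      = ∑ y : Fin M → Fin 2, ∏ i, (-1:ℝ) ^ (((u i).val + (v i).val) * (y i).val) :=
        Finset.sum_congr rfl fun y _ => h1 y
    _ = ∏ i, ∑ c : Fin 2, (-1:ℝ) ^ (((u i).val + (v i).val) * c.val) :=
        (Fintype.prod_sum (κ := fun _ : Fin M => Fin 2)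
          (fun i c => (-1:ℝ) ^ (((u i).val + (v i).val) * c.val))).symm
    _ = ∏ i : Fin M, (if u i = v i then (2:ℝ) else 0) :=
        Finset.prod_congr rfl fun i _ => step_aux (u i) (v i)
    _ = if u = v then (2:ℝ)^M else 0 := by
        by_cases h : u = v
        · subst h; simp
        · rw [if_neg h]
          obtain ⟨i, hi⟩ : ∃ i, u i ≠ v i := by
            by_contra hc; push_neg at hc; exact h (funext hc)
          exact Finset.prod_eq_zero (Finset.mem_univ i) (by rw [if_neg hi])

lemma parseval {M : ℕ} (c : (Fin M → Fin 2) → ℝ) :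
    ((2:ℝ)^M)⁻¹ * ∑ y : Fin M → Fin 2,
      (∑ s : Fin M → Fin 2, c s * (-1:ℝ) ^ (∑ i, (s i).val * (y i).val)) ^ 2
    = ∑ s : Fin M → Fin 2, c s ^ 2 := by
  have key : ∑ y : Fin M → Fin 2,
      (∑ s : Fin M → Fin 2, c s * (-1:ℝ) ^ (∑ i, (s i).val * (y i).val)) ^ 2
      = (2:ℝ)^M * ∑ s : Fin M → Fin 2, c s ^ 2 := by
    calc ∑ y : Fin M → Fin 2,
        (∑ s : Fin M → Fin 2, c s * (-1:ℝ) ^ (∑ i, (s i).val * (y i).val)) ^ 2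
        = ∑ y : Fin M → Fin 2, ∑ s : Fin M → Fin 2, ∑ t : Fin M → Fin 2,
            c s * c t * ((-1:ℝ) ^ (∑ i, (s i).val * (y i).val) *
              (-1:ℝ) ^ (∑ i, (t i).val * (y i).val)) := by
          refine Finset.sum_congr rfl fun y _ => ?_
          rw [sq, Finset.sum_mul_sum]
          exact Finset.sum_congr rfl fun s _ => Finset.sum_congr rfl fun t _ => by ring
      _ = ∑ s : Fin M → Fin 2, ∑ t : Fin M → Fin 2,
            c s * c t * ∑ y : Fin M → Fin 2,
              ((-1:ℝ) ^ (∑ i, (s i).val * (y i).val) *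
                (-1:ℝ) ^ (∑ i, (t i).val * (y i).val)) := by
          rw [Finset.sum_comm]
          refine Finset.sum_congr rfl fun s _ => ?_
          rw [Finset.sum_comm]
          exact Finset.sum_congr rfl fun t _ => (Finset.mul_sum _ _ _).symm
      _ = ∑ s : Fin M → Fin 2, ∑ t : Fin M → Fin 2,
            c s * c t * (if s = t then (2:ℝ)^M else 0) :=
          Finset.sum_congr rfl fun s _ => Finset.sum_congr rfl fun t _ => by rw [orth]
      _ = (2:ℝ)^M * ∑ s : Fin M → Fin 2, c s ^ 2 := by
          rw [Finset.mul_sum]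
          refine Finset.sum_congr rfl fun s _ => ?_
          simp only [mul_ite, mul_zero, Finset.sum_ite_eq, Finset.mem_univ, if_true]
          ring
  rw [key, inv_mul_cancel_left₀ (by positivity)]

/-- Fourier inversion. -/
lemma inversion {r M : ℕ} (q : (Fin r → Fin 2) → (Fin M → Fin 2) → ℝ)
    (x : Fin r → Fin 2) (y : Fin M → Fin 2) :
    ∑ s : Fin M → Fin 2, fourier2 q x s * (-1:ℝ) ^ (∑ i, (s i).val * (y i).val)
    = q x y := by
  have hexp : ∀ (a b : Fin M → Fin 2),
      (∑ i, (a i).val * (b i).val) = ∑ i, (b i).val * (a i).val :=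
    fun a b => Finset.sum_congr rfl fun i _ => mul_comm _ _
  calc ∑ s : Fin M → Fin 2, fourier2 q x s * (-1:ℝ) ^ (∑ i, (s i).val * (y i).val)
      = ∑ s : Fin M → Fin 2, ∑ y' : Fin M → Fin 2, ((2:ℝ)^M)⁻¹ * (q x y' *
          ((-1:ℝ) ^ (∑ i, (y' i).val * (s i).val) *
           (-1:ℝ) ^ (∑ i, (y i).val * (s i).val))) := by
        refine Finset.sum_congr rfl fun s _ => ?_
        unfold fourier2
        rw [Finset.mul_sum, Finset.sum_mul]
        refine Finset.sum_congr rfl fun y' _ => ?_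
        rw [hexp y' s, hexp y s]
        ring
    _ = ∑ y' : Fin M → Fin 2, ∑ s : Fin M → Fin 2, ((2:ℝ)^M)⁻¹ * (q x y' *
          ((-1:ℝ) ^ (∑ i, (y' i).val * (s i).val) *
           (-1:ℝ) ^ (∑ i, (y i).val * (s i).val))) := Finset.sum_comm
    _ = ∑ y' : Fin M → Fin 2, ((2:ℝ)^M)⁻¹ * (q x y' * (if y' = y then (2:ℝ)^M else 0)) := by
        refine Finset.sum_congr rfl fun y' _ => ?_
        rw [← orth y' y, Finset.mul_sum, Finset.mul_sum]
    _ = q x y := by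
        simp only [mul_ite, mul_zero, Finset.sum_ite_eq', Finset.mem_univ, if_true]
        rw [mul_comm (q x y), ← mul_assoc, inv_mul_cancel₀ (by positivity), one_mul]

/-- If the Fourier spectrum has a gap (`q̂(x,s) = 0` whenever `0 < wt s < d`), then the
noisy function is exponentially close (in `d`) to its `y`-independent zero-mode. -/
theorem spectral_gap_uniformity (r M d : ℕ) (hr : 0 < r) (hM : 0 < M) (hd : 0 < d)
    (ε : ℝ) (hε0 : 0 ≤ ε) (hε : ε ≤ 1 / 2)
    (q : (Fin r → Fin 2) → (Fin M → Fin 2) → ℝ)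
    (hgap : ∀ (x : Fin r → Fin 2) (s : Fin M → Fin 2),
      0 < hammingWt s → hammingWt s < d → fourier2 q x s = 0) :
    ((2 : ℝ) ^ M)⁻¹ * ∑ y : Fin M → Fin 2,
        (∑ x : Fin r → Fin 2,
          |noisyFn ε q x y - fourier2 q x (fun _ => 0)|) ^ 2
      ≤ 2 ^ r * (1 - 2 * ε) ^ (2 * d) *
          (((2 : ℝ) ^ M)⁻¹ * ∑ x : Fin r → Fin 2, ∑ y : Fin M → Fin 2, (q x y) ^ 2) := by
  have h01 : (0:ℝ) ≤ 1 - 2*ε := by linarith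
  have h11 : (1:ℝ) - 2*ε ≤ 1 := by linarith
  set z : Fin M → Fin 2 := (fun _ => 0) with hz
  set c : (Fin r → Fin 2) → (Fin M → Fin 2) → ℝ :=
    fun x s => if s = z then 0 else (1 - 2*ε)^(hammingWt s) * fourier2 q x s with hc
  have hwt0 : hammingWt z = 0 := by simp [hammingWt, hz]
  have hdiff : ∀ x y, noisyFn ε q x y - fourier2 q x z
      = ∑ s : Fin M → Fin 2, c x s * (-1:ℝ)^(∑ i, (s i).val * (y i).val) := by
    intro x y
    have hterm : ∀ s : Fin M → Fin 2, c x s * (-1:ℝ)^(∑ i, (s i).val * (y i).val)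
        = (1 - 2*ε)^(hammingWt s) * (-1:ℝ)^(∑ i, (s i).val * (y i).val) * fourier2 q x s
          - (if s = z then fourier2 q x z else 0) := by
      intro s
      by_cases hs : s = z
      · subst hs
        simp [hc, hwt0, hz, hammingWt]
      · simp only [hc, if_neg hs]
        ring
    rw [Finset.sum_congr rfl (fun s _ => hterm s), Finset.sum_sub_distrib,
        Finset.sum_ite_eq' Finset.univ z (fun _ => fourier2 q x z)]
    simp [noisyFn]
  have hcard : (Finset.univ : Finset (Fin r → Fin 2)).card = 2^r := by
    simp [Finset.card_univ]
  have hbound : ∀ x s, (c x s)^2 ≤ (1-2*ε)^(2*d) * (fourier2 q x s)^2 := by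
    intro x s
    have hrhs : (0:ℝ) ≤ (1-2*ε)^(2*d) * (fourier2 q x s)^2 :=
      mul_nonneg (pow_nonneg h01 _) (sq_nonneg _)
    by_cases hs : s = z
    · have hcz : c x s = 0 := by simp [hc, hs]
      rw [hcz]
      simpa using hrhs
    · have hwt : 0 < hammingWt s := by
        obtain ⟨i, hi⟩ : ∃ i, s i ≠ 0 := by
          by_contra hcon; push_neg at hcon; exact hs (funext fun i => hcon i)
        have h3 : (s i).val ≠ 0 := fun h => hi (Fin.ext (by simpa using h))
        have h2 : (s i).val < 2 := (s i).isLt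
        have h1 : s i = 1 := Fin.ext (by simp; omega)
        exact Finset.card_pos.mpr ⟨i, Finset.mem_filter.mpr ⟨Finset.mem_univ i, h1⟩⟩
      by_cases hlt : hammingWt s < d
      · have hcz : c x s = 0 := by simp [hc, hs, hgap x s hwt hlt]
        rw [hcz]
        simpa using hrhs
      · push_neg at hlt
        have hcz : c x s = (1 - 2*ε)^(hammingWt s) * fourier2 q x s := by
          simp [hc, hs]
        rw [hcz, mul_pow, ← pow_mul]
        apply mul_le_mul_of_nonneg_right _ (sq_nonneg _)
        exact pow_le_pow_of_le_one h01 h11 (by omega)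
  have hpars2 : ∀ x, ∑ s : Fin M → Fin 2, (fourier2 q x s)^2
      = ((2:ℝ)^M)⁻¹ * ∑ y : Fin M → Fin 2, (q x y)^2 := by
    intro x
    rw [← parseval (fourier2 q x)]
    congr 1
    exact Finset.sum_congr rfl fun y _ => by rw [inversion]
  calc ((2 : ℝ) ^ M)⁻¹ * ∑ y : Fin M → Fin 2,
        (∑ x : Fin r → Fin 2, |noisyFn ε q x y - fourier2 q x z|) ^ 2
      ≤ ((2:ℝ)^M)⁻¹ * ∑ y : Fin M → Fin 2,
          ((2:ℝ)^r * ∑ x : Fin r → Fin 2, (noisyFn ε q x y - fourier2 q x z)^2) := by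
        refine mul_le_mul_of_nonneg_left (Finset.sum_le_sum fun y _ => ?_) (by positivity)
        have h := sq_sum_le_card_mul_sum_sq
          (s := (Finset.univ : Finset (Fin r → Fin 2)))
          (f := fun x => |noisyFn ε q x y - fourier2 q x z|)
        simp only [sq_abs, hcard] at h
        calc (∑ x : Fin r → Fin 2, |noisyFn ε q x y - fourier2 q x z|) ^ 2
            ≤ ((2^r : ℕ) : ℝ) * ∑ x : Fin r → Fin 2, (noisyFn ε q x y - fourier2 q x z)^2 := h
          _ = (2:ℝ)^r * ∑ x : Fin r → Fin 2, (noisyFn ε q x y - fourier2 q x z)^2 := by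
              push_cast; ring
    _ = (2:ℝ)^r * ∑ x : Fin r → Fin 2,
          (((2:ℝ)^M)⁻¹ * ∑ y : Fin M → Fin 2, (noisyFn ε q x y - fourier2 q x z)^2) := by
        simp only [Finset.mul_sum]
        rw [Finset.sum_comm]
        exact Finset.sum_congr rfl fun x _ => Finset.sum_congr rfl fun y _ => by ring
    _ = (2:ℝ)^r * ∑ x : Fin r → Fin 2, ∑ s : Fin M → Fin 2, (c x s)^2 := by
        congr 1
        refine Finset.sum_congr rfl fun x _ => ?_
        rw [← parseval (c x)]
        congr 1
        exact Finset.sum_congr rfl fun y _ => by rw [hdiff x y]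
    _ ≤ (2:ℝ)^r * ∑ x : Fin r → Fin 2,
          ((1-2*ε)^(2*d) * ∑ s : Fin M → Fin 2, (fourier2 q x s)^2) := by
        refine mul_le_mul_of_nonneg_left (Finset.sum_le_sum fun x _ => ?_) (by positivity)
        rw [Finset.mul_sum]
        exact Finset.sum_le_sum fun s _ => hbound x s
    _ = 2 ^ r * (1 - 2 * ε) ^ (2 * d) *
          (((2 : ℝ) ^ M)⁻¹ * ∑ x : Fin r → Fin 2, ∑ y : Fin M → Fin 2, (q x y) ^ 2) := by
        simp only [hpars2, Finset.mul_sum]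
        exact Finset.sum_congr rfl fun x _ => Finset.sum_congr rfl fun y _ => by ring
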